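/- For a fraction 1/j in the Farey sequence F_m (with 1 ≤ j ≤ m), the fraction (⌈m/j⌉ - 1) / (j·(⌈m/j⌉ - 1) + 1) is the immediate predecessor of 1/j in F_m. -/

import Mathlib

/-- The Farey sequence of order `m`: rationals in `[0,1]` with denominator at most `m`. -/
def Farey (m : ℕ) : Set ℚ := {q | 0 ≤ q ∧ q ≤ 1 ∧ q.den ≤ m}

/-- For `1/j ∈ F_m`, the fraction `(⌈m/j⌉-1)/(j(⌈m/j⌉-1)+1)` is the immediate
predecessor of `1/j` in `F_m`. -/
theorem farey_pred_one_div (m j : ℕ) (hm : 1 < m) (hj : 1 ≤ j) (hjm : j ≤ m) :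
    ((⌈(m : ℚ) / j⌉ - 1 : ℤ) : ℚ) / ((j : ℚ) * ((⌈(m : ℚ) / j⌉ - 1 : ℤ) : ℚ) + 1) ∈ Farey m ∧
      ((⌈(m : ℚ) / j⌉ - 1 : ℤ) : ℚ) / ((j : ℚ) * ((⌈(m : ℚ) / j⌉ - 1 : ℤ) : ℚ) + 1) < 1 / j ∧
      ∀ r ∈ Farey m, r < 1 / (j : ℚ) →
        r ≤ ((⌈(m : ℚ) / j⌉ - 1 : ℤ) : ℚ) / ((j : ℚ) * ((⌈(m : ℚ) / j⌉ - 1 : ℤ) : ℚ) + 1) := by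
  set K : ℤ := ⌈(m : ℚ) / j⌉ - 1 with hKdef
  have hjq : (0 : ℚ) < j := by exact_mod_cast Nat.lt_of_lt_of_le Nat.zero_lt_one hj
  have hmq : (1 : ℚ) ≤ (m : ℚ) / j := by
    rw [le_div_iff₀ hjq]
    exact_mod_cast by linarith [hjm]
  have hK0 : 0 ≤ K := by
    have : (1 : ℤ) ≤ ⌈(m : ℚ) / j⌉ := by
      exact Int.le_ceil_iff.mpr (by push_cast; linarith)
    omega
  have hKlt : (K : ℚ) < (m : ℚ) / j := by
    have h1 := Int.ceil_lt_add_one ((m : ℚ) / j)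
    push_cast [hKdef]
    linarith
  have hjK : (j : ℤ) * K + 1 ≤ m := by
    have h2 : (j : ℚ) * K < m := by
      have := (mul_lt_mul_of_pos_left hKlt hjq)
      rwa [mul_div_cancel₀ _ (ne_of_gt hjq)] at this
    have : (j : ℤ) * K < m := by exact_mod_cast h2
    omega
  have hden : (0 : ℚ) < (j : ℚ) * K + 1 := by
    have : (0 : ℚ) ≤ (j : ℚ) * K := by
      apply mul_nonneg hjq.le
      exact_mod_cast hK0
    linarith
  have hcast : (j : ℚ) * (K : ℚ) + 1 = (((j : ℤ) * K + 1 : ℤ) : ℚ) := by push_cast; ring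
  refine ⟨⟨?_, ?_, ?_⟩, ?_, ?_⟩
  · apply div_nonneg _ hden.le
    exact_mod_cast hK0
  · rw [div_le_one hden]
    have h1 : (0 : ℚ) ≤ K := by exact_mod_cast hK0
    have h2 : (1 : ℚ) ≤ j := by exact_mod_cast hj
    nlinarith [mul_nonneg (sub_nonneg.mpr h2) h1]
  · -- denominator bound
    have hdvd : ((((K : ℚ) / ((j : ℚ) * K + 1)).den : ℤ)) ∣ ((j : ℤ) * K + 1) := by
      rw [hcast, ← Rat.divInt_eq_div]
      exact Rat.den_dvd _ _
    have hpos : (0 : ℤ) < (j : ℤ) * K + 1 := by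
      have : (0 : ℤ) ≤ (j : ℤ) * K := mul_nonneg (by exact_mod_cast Nat.zero_le j) hK0
      omega
    have := Int.le_of_dvd hpos hdvd
    exact_mod_cast le_trans this hjK
  · rw [div_lt_div_iff₀ hden hjq]
    nlinarith [hK0]
  · rintro r ⟨hr0, _, hrden⟩ hrlt
    have hnum0 : 0 ≤ r.num := Rat.num_nonneg.mpr hr0
    have hrden' : (r.den : ℚ) > 0 := by exact_mod_cast r.pos
    -- j * r.num < r.den
    have hkey : (j : ℤ) * r.num + 1 ≤ (r.den : ℤ) := by
      have h := hrlt
      rw [← Rat.num_div_den r, div_lt_div_iff₀ hrden' hjq] at h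
      have h2 : (((j : ℤ) * r.num : ℤ) : ℚ) < (((r.den : ℤ)) : ℚ) := by push_cast; linarith
      have : (j : ℤ) * r.num < (r.den : ℤ) := by exact_mod_cast h2
      omega
    -- r.num ≤ K
    have hnumK : r.num ≤ K := by
      have h1 : (r.num : ℚ) < (m : ℚ) / j := by
        rw [lt_div_iff₀ hjq]
        have hdm : (r.den : ℤ) ≤ m := by exact_mod_cast hrden
        exact_mod_cast by nlinarith [hkey, hdm]
      have := Int.lt_ceil.mpr h1
      omega
    rw [← Rat.num_div_den r, div_le_div_iff₀ hrden' hden]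
    have c1 : (r.num : ℚ) ≤ (K : ℚ) := by exact_mod_cast hnumK
    have c2 : (j : ℚ) * r.num + 1 ≤ (r.den : ℚ) := by exact_mod_cast hkey
    have c3 : (0 : ℚ) ≤ (K : ℚ) := by exact_mod_cast hK0
    have c4 : (0 : ℚ) ≤ (r.num : ℚ) := by exact_mod_cast hnum0
    nlinarith
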